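/- Let k be a field and L a finite modular lattice of height n=d(L). If L is lattice-modeled by a finite set E of vectors in a k-vector space, equipped with the linear-dependence matroid, via a bijection φ:J(L)→E, then Φ(a) := span(φ(J(a))) defines a tight embedding of L into the subspace lattice of k^n. Conversely, every tight embedding Φ′ of L into the subspace lattice of k^m arises, after identifying the subspace Φ′(1) with k^n, from such a φ-induced tight embedding of L into the subspace lattice of k^n. -/

import Mathlib

open scoped Classical
set_option linter.unusedSectionVars false
set_option maxHeartbeats 1000000
noncomputable section

/-! ### Lattice-theoretic preliminaries -/

/-- A tight embedding between bounded lattices: a cover-preserving lattice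
homomorphism sending bottom to bottom. -/
def IsTightEmbedding {L L' : Type*} [Lattice L] [BoundedOrder L] [Lattice L'] [BoundedOrder L']
    (f : L → L') : Prop :=
  (∀ a b : L, f (a ⊔ b) = f a ⊔ f b) ∧ (∀ a b : L, f (a ⊓ b) = f a ⊓ f b) ∧
    f ⊥ = ⊥ ∧ ∀ a b : L, a ⋖ b → f a ⋖ f b

/-- `Part(n)` is formalized as `Setoid (Fin n)`, the lattice of partitions of an
`n`-element set ordered by refinement. -/
def TightlyPartitionEmbeddable (L : Type*) [Lattice L] [BoundedOrder L] : Prop :=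
  ∃ (n : ℕ) (f : L → Setoid (Fin n)), IsTightEmbedding f

/-- 2-distributivity. -/
def TwoDistrib (L : Type*) [Lattice L] : Prop :=
  ∀ a b c d : L, a ⊓ (b ⊔ c ⊔ d) = (a ⊓ (b ⊔ c)) ⊔ (a ⊓ (b ⊔ d)) ⊔ (a ⊓ (c ⊔ d))

/-- `L` has a cover-preserving sublattice isomorphic to `M₄`: six elements
`b, t, a₁,…,a₄` with `b ⋖ aᵢ ⋖ t` (covers in `L`), `aᵢ ⊓ aⱼ = b`, `aᵢ ⊔ aⱼ = t`. -/
def HasCoverPreservingM4 (L : Type*) [Lattice L] : Prop :=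
  ∃ (b t : L) (a : Fin 4 → L), Function.Injective a ∧
    (∀ i, b ⋖ a i) ∧ (∀ i, a i ⋖ t) ∧
    (∀ i j, i ≠ j → a i ⊓ a j = b) ∧ ∀ i j, i ≠ j → a i ⊔ a j = t

/-- Thin: 2-distributive and without cover-preserving `M₄`. -/
def IsThin (L : Type*) [Lattice L] : Prop := TwoDistrib L ∧ ¬ HasCoverPreservingM4 L

/-- Height `d(L)` of a finite lattice: one less than the largest cardinality of a chain. -/
def latHeight (L : Type*) [Lattice L] [Fintype L] : ℕ :=
  (((Finset.univ : Finset (Finset L)).filter fun c : Finset L => IsChain (· ≤ ·) (c : Set L)).sup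
    Finset.card) - 1

/-- The set `J(L)` of (nonzero) join-irreducible elements of a finite lattice. -/
def JFinset (L : Type*) [Lattice L] [Fintype L] : Finset L :=
  Finset.univ.filter fun p => SupIrred p

/-- `J(a) = {p ∈ J(L) : p ≤ a}`. -/
def Jle {L : Type*} [Lattice L] [Fintype L] (a : L) : Finset L :=
  Finset.univ.filter fun p => SupIrred p ∧ p ≤ a

/-! ### Lattice congruences -/

/-- A congruence of a lattice. -/
structure LatCon (N : Type*) [Lattice N] where
  r : N → N → Prop
  refl : ∀ a, r a a
  symm : ∀ {a b}, r a b → r b a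
  trans : ∀ {a b c}, r a b → r b c → r a c
  sup_comp : ∀ {a b c d}, r a b → r c d → r (a ⊔ c) (b ⊔ d)
  inf_comp : ∀ {a b c d}, r a b → r c d → r (a ⊓ c) (b ⊓ d)

/-- Containment of congruences. -/
def LatCon.le {N : Type*} [Lattice N] (c d : LatCon N) : Prop := ∀ a b, c.r a b → d.r a b

/-- A maximal (proper) congruence: a coatom of the congruence lattice. -/
def LatCon.IsMaximal {N : Type*} [Lattice N] (c : LatCon N) : Prop :=
  (∃ a b, ¬ c.r a b) ∧ ∀ d : LatCon N, c.le d → d.le c ∨ ∀ a b, d.r a b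

/-! ### Partial linear spaces -/

/-- A partial linear space with 3-element lines: any two distinct lines meet in
at most one point. -/
structure PLS (α : Type*) where
  J : Finset α
  Λ : Finset (Finset α)
  line_sub : ∀ ℓ ∈ Λ, ℓ ⊆ J
  line_card : ∀ ℓ ∈ Λ, ℓ.card = 3
  line_inter : ∀ ℓ ∈ Λ, ∀ ℓ' ∈ Λ, ℓ ≠ ℓ' → (ℓ ∩ ℓ').card ≤ 1

/-- PLS-rank `rk(J,Λ) = |J| - |Λ|`. -/
def PLS.rk {α : Type*} (S : PLS α) : ℤ := (S.J.card : ℤ) - (S.Λ.card : ℤ)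

/-- A path `[p₀,…,p_{n-1}]` together with its lines `ℓᵢ = [pᵢ,pᵢ₊₁]` (`i+1 < n`):
the lines exist, are distinct, and consecutive lines are the only intersecting ones. -/
structure PLSPath (α : Type*) where
  n : ℕ
  two_le : 2 ≤ n
  p : ℕ → α
  line : ℕ → Finset α
  p_mem_left : ∀ i, i + 1 < n → p i ∈ line i
  p_mem_right : ∀ i, i + 1 < n → p (i + 1) ∈ line i
  p_ne : ∀ i, i + 1 < n → p i ≠ p (i + 1)
  lines_ne : ∀ i j, i < j → j + 1 < n → line i ≠ line j
  lines_inter_iff : ∀ i j, i < j → j + 1 < n → ((line i ∩ line j).Nonempty ↔ j = i + 1)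

namespace PLSPath
variable {α : Type*}

/-- The underlying point set `P*` of a path. -/
def ptSet (P : PLSPath α) : Finset α := (Finset.range (P.n - 1)).biUnion P.line

/-- First point of a path. -/
def first (P : PLSPath α) : α := P.p 0

/-- Last point of a path. -/
def last (P : PLSPath α) : α := P.p (P.n - 1)

/-- The set of lines of a path. -/
def lineSet (P : PLSPath α) : Finset (Finset α) := (Finset.range (P.n - 1)).image P.line

/-- The path lies in the line set `Λ`. -/
def In (P : PLSPath α) (Λ : Finset (Finset α)) : Prop := ∀ i, i + 1 < P.n → P.line i ∈ Λ

end PLSPath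

/-- A cycle `(p₀,…,p_{n-1})`: a path whose closing line `[p_{n-1},p₀]` exists and
contains a point not on any path line. -/
structure PLSCycle (α : Type*) extends PLSPath α where
  closing : Finset α
  closing_last : p (n - 1) ∈ closing
  closing_first : p 0 ∈ closing
  closing_new : ∃ q ∈ closing, ∀ i, i + 1 < n → q ∉ line i

namespace PLSCycle
variable {α : Type*}

/-- The cycle lies in the line set `Λ`. -/
def In (C : PLSCycle α) (Λ : Finset (Finset α)) : Prop :=
  C.toPLSPath.In Λ ∧ C.closing ∈ Λ

/-- The `i`-th `C`-line (for `i < n`; the last one is the closing line). -/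
def cline (C : PLSCycle α) (i : ℕ) : Finset α :=
  if i + 1 < C.n then C.line i else C.closing

/-- The underlying point set `C*` of a cycle. -/
def cptSet (C : PLSCycle α) : Finset α := (Finset.range C.n).biUnion C.cline

/-- The set `Λ*` of `C`-lines of a cycle. -/
def clineSet (C : PLSCycle α) : Finset (Finset α) := (Finset.range C.n).image C.cline

/-- `q` is the `C`-midpoint of the `i`-th `C`-line. -/
def IsMidpoint (C : PLSCycle α) (i : ℕ) (q : α) : Prop :=
  q ∈ C.cline i ∧ q ≠ C.p i ∧ q ≠ C.p ((i + 1) % C.n)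

/-- `q` is a `C`-midpoint (of some `C`-line). -/
def IsMidpointPt (C : PLSCycle α) (q : α) : Prop := ∃ i < C.n, C.IsMidpoint i q

/-- The set of `C`-midpoints. -/
def midSet (C : PLSCycle α) : Finset α := C.cptSet.filter fun q => C.IsMidpointPt q

end PLSCycle

/-- Acyclic PLS: it has no cycle. -/
def PLS.Acyclic {α : Type*} (S : PLS α) : Prop := ∀ C : PLSCycle α, ¬ C.In S.Λ

/-- QIMP: each line contains a quasi-isolated point. -/
def PLS.IsQIMP {α : Type*} (S : PLS α) : Prop :=
  ∀ ℓ ∈ S.Λ, ∃ q ∈ ℓ, ∀ ℓ' ∈ S.Λ, ℓ' ≠ ℓ → q ∉ ℓ'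

/-- UMP: any line that occurs as a `C`-line has a unique midpoint, independent of
the cycle. -/
def PLS.IsUMP {α : Type*} (S : PLS α) : Prop :=
  ∀ C C' : PLSCycle α, C.In S.Λ → C'.In S.Λ → ∀ i j, i < C.n → j < C'.n →
    C.cline i = C'.cline j →
    ∀ q q', C.IsMidpoint i q → C'.IsMidpoint j q' → q = q'

/-- `(J,Λ)` is a tree of the PLSes `F 0, …, F (t-1)`. -/
def PLS.IsTreeOf {α : Type*} (S : PLS α) (t : ℕ) (F : ℕ → PLS α) : Prop :=
  S.J = (Finset.range t).biUnion (fun i => (F i).J) ∧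
  S.Λ = (Finset.range t).biUnion (fun i => (F i).Λ) ∧
  ∀ i, 0 < i → i < t → ∃ x, (F i).J ∩ (Finset.range i).biUnion (fun j => (F j).J) = {x}

/-- Sparse PLS: a testifying ordering of the lines exists. -/
def PLS.Sparse {α : Type*} (S : PLS α) : Prop :=
  ∃ ℓ : ℕ → Finset α, (∀ i, i < S.Λ.card → ℓ i ∈ S.Λ) ∧
    (∀ i j, i < S.Λ.card → j < S.Λ.card → i ≠ j → ℓ i ≠ ℓ j) ∧
    ∀ i, i + 1 < S.Λ.card → ¬ ℓ (i + 1) ⊆ (Finset.range (i + 1)).biUnion ℓ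

/-- Small girth: every cycle consists of three or four lines. -/
def PLS.SmallGirth {α : Type*} (S : PLS α) : Prop :=
  ∀ C : PLSCycle α, C.In S.Λ → C.n = 3 ∨ C.n = 4

/-- Type 1 midpoint-link of the cycle `C`: a path from a `C`-midpoint to a
`C`-junction meeting `C*` only in its endpoints. -/
def IsType1Link {α : Type*} (C : PLSCycle α) (P : PLSPath α) : Prop :=
  C.IsMidpointPt P.first ∧ (∃ j < C.n, P.last = C.p j) ∧
    P.ptSet ∩ C.cptSet = {P.first, P.last}

/-- Type 2 midpoint-link of the cycle `C`: a path between two `C`-midpoints meeting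
`C*` only in its endpoints. -/
def IsType2Link {α : Type*} (C : PLSCycle α) (P : PLSPath α) : Prop :=
  C.IsMidpointPt P.first ∧ C.IsMidpointPt P.last ∧ P.first ≠ P.last ∧
    P.ptSet ∩ C.cptSet = {P.first, P.last}

/-- Benign type 1 link: the midpoint and junction sit on a common `C`-line. -/
def Benign1 {α : Type*} (C : PLSCycle α) (P : PLSPath α) : Prop :=
  ∃ i < C.n, P.first ∈ C.cline i ∧ P.last ∈ C.cline i

/-- Benign type 2 link: the two midpoints sit on intersecting `C`-lines. -/
def Benign2 {α : Type*} (C : PLSCycle α) (P : PLSPath α) : Prop :=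
  ∃ i, i < C.n ∧ ∃ j, j < C.n ∧ C.IsMidpoint i P.first ∧ C.IsMidpoint j P.last ∧
    (C.cline i ∩ C.cline j).Nonempty

/-- A benign midpoint-link (of either type). -/
def BenignLink {α : Type*} (C : PLSCycle α) (P : PLSPath α) : Prop :=
  (IsType1Link C P ∧ Benign1 C P) ∨ (IsType2Link C P ∧ Benign2 C P)

/-- BMPL: every midpoint-link of every cycle is benign. -/
def PLS.IsBMPL {α : Type*} (S : PLS α) : Prop :=
  ∀ C : PLSCycle α, C.In S.Λ → ∀ P : PLSPath α, P.In S.Λ →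
    (IsType1Link C P → Benign1 C P) ∧ (IsType2Link C P → Benign2 C P)

/-- All midpoint-links are of type 1, i.e. there are no type 2 midpoint-links. -/
def PLS.OnlyType1Links {α : Type*} (S : PLS α) : Prop :=
  ∀ C : PLSCycle α, C.In S.Λ → ∀ P : PLSPath α, P.In S.Λ → ¬ IsType2Link C P

/-- `S'` arises from `S` by adding the path `P`. -/
def AddsOnePath {α : Type*} (S' S : PLS α) (P : PLSPath α) : Prop :=
  P.In S'.Λ ∧ S'.J = S.J ∪ P.ptSet ∧ S.J ∩ P.ptSet = {P.first, P.last} ∧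
    (∀ i, i + 1 < P.n → P.line i ∉ S.Λ) ∧ S'.Λ = S.Λ ∪ P.lineSet

/-- `S'` arises from `S` by adding a benign midpoint-link. -/
def AddsBenignLink {α : Type*} (S' S : PLS α) : Prop :=
  ∃ (P : PLSPath α) (C : PLSCycle α), C.In S.Λ ∧ AddsOnePath S' S P ∧ BenignLink C P

/-- `S'` arises from `S` by adding a benign midpoint-link of type 1. -/
def AddsBenignLink1 {α : Type*} (S' S : PLS α) : Prop :=
  ∃ (P : PLSPath α) (C : PLSCycle α), C.In S.Λ ∧ AddsOnePath S' S P ∧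
    IsType1Link C P ∧ Benign1 C P

/-- Augmented UMP: obtained from a UMP by iteratively adding benign midpoint-links. -/
def PLS.IsAugmentedUMP {α : Type*} (S : PLS α) : Prop :=
  ∃ S₀ : PLS α, S₀.IsUMP ∧ Relation.ReflTransGen (fun X Y => AddsBenignLink Y X) S₀ S

/-- Augmented UMP of type 1: only benign midpoint-links of type 1 were added. -/
def PLS.IsAugmentedUMP1 {α : Type*} (S : PLS α) : Prop :=
  ∃ S₀ : PLS α, S₀.IsUMP ∧ Relation.ReflTransGen (fun X Y => AddsBenignLink1 Y X) S₀ S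

/-! ### Graphs -/

/-- `T` is the edge set of a triangle of `G`. -/
def IsTriangle {V : Type*} (G : SimpleGraph V) (T : Finset (Sym2 V)) : Prop :=
  ∃ a b c : V, G.Adj a b ∧ G.Adj b c ∧ G.Adj a c ∧ T = {s(a, b), s(b, c), s(a, c)}

/-- `Γ` is the edge set of a circuit of `G`. -/
def IsCircuitSet {V : Type*} (G : SimpleGraph V) (Γ : Finset (Sym2 V)) : Prop :=
  ∃ (v : V) (w : G.Walk v v), w.IsCycle ∧ w.edges.toFinset = Γ

/-- `Γ` is the edge set of a chordless circuit of `G`. -/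
def IsChordlessCircuit {V : Type*} (G : SimpleGraph V) (Γ : Finset (Sym2 V)) : Prop :=
  ∃ (v : V) (w : G.Walk v v), w.IsCycle ∧ w.edges.toFinset = Γ ∧
    ∀ a b : V, a ∈ w.support → b ∈ w.support → G.Adj a b → s(a, b) ∈ Γ

/-- `W` is the edge set of a wheel of `G` (degenerate wheel = triangle). -/
def IsWheel {V : Type*} (G : SimpleGraph V) (W : Finset (Sym2 V)) : Prop :=
  ∃ (n : ℕ) (hub : V) (v : ℕ → V), 2 ≤ n ∧
    (∀ i j, i < n → j < n → i ≠ j → v i ≠ v j) ∧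
    (∀ i, i < n → G.Adj hub (v i)) ∧
    (∀ i, i < n → G.Adj (v i) (v ((i + 1) % n))) ∧
    W = (Finset.range n).image (fun i => s(hub, v i)) ∪
        (Finset.range n).image (fun i => s(v i, v ((i + 1) % n)))

/-- Rank of an edge set `B` in the cycle matroid on the vertex set `V`:
`|V|` minus the number of connected components of `(V, B)`. -/
def grkOn (V : Type*) [Fintype V] (B : Finset (Sym2 V)) : ℕ :=
  Fintype.card V - Nat.card (SimpleGraph.fromEdgeSet (B : Set (Sym2 V))).ConnectedComponent

/-- Rank of the cycle matroid of the graph `G` (on its full edge set). -/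
def graphRank {V : Type*} [Fintype V] (G : SimpleGraph V) : ℕ :=
  Fintype.card V - Nat.card G.ConnectedComponent

/-- Closure of an edge set in the cycle matroid of `G`. -/
def graphCl {V : Type*} [Fintype V] (G : SimpleGraph V) (B : Finset (Sym2 V)) : Set (Sym2 V) :=
  {e | e ∈ G.edgeSet ∧ grkOn V (insert e B) = grkOn V B}

/-- The partition of the vertex set into connected components of `(V, B)`. -/
def compSetoid {V : Type*} (B : Finset (Sym2 V)) : Setoid V :=
  ⟨fun a b => (SimpleGraph.fromEdgeSet (B : Set (Sym2 V))).Reachable a b,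
    ⟨fun a => SimpleGraph.Reachable.refl a, fun h => h.symm, fun h h' => h.trans h'⟩⟩

/-- `ψ` line-preservingly models the PLS `S` by the graph `G`: it is a bijection from
the points onto the edges taking each line to (the edge set of) a triangle. -/
def LinePres {α V : Type*} (S : PLS α) (G : SimpleGraph V) (ψ : α → Sym2 V) : Prop :=
  Set.BijOn ψ (S.J : Set α) G.edgeSet ∧ ∀ ℓ ∈ S.Λ, IsTriangle G (ℓ.image ψ)

/-- Line-preserving rank-modeling by a graph. -/
def LinePresRankModels {α V : Type*} [Fintype V] (S : PLS α) (G : SimpleGraph V)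
    (ψ : α → Sym2 V) : Prop :=
  LinePres S G ψ ∧ (graphRank G : ℤ) = S.rk

/-- Cycle-preservation: the midpoints of each cycle map to a circuit of `G`. -/
def CyclePresCond {α V : Type*} (S : PLS α) (G : SimpleGraph V) (ψ : α → Sym2 V) : Prop :=
  ∀ C : PLSCycle α, C.In S.Λ → IsCircuitSet G (C.midSet.image ψ)

/-- Circuit-friendliness: each chordless circuit of `G` corresponds to a line or to
the set of midpoints of a cycle of `S`. -/
def CircuitFriendlyCond {α V : Type*} (S : PLS α) (G : SimpleGraph V) (ψ : α → Sym2 V) : Prop :=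
  ∀ Γ : Finset (Sym2 V), IsChordlessCircuit G Γ →
    (∃ ℓ ∈ S.Λ, ∀ x ∈ S.J, (ψ x ∈ Γ ↔ x ∈ ℓ)) ∨
    (∃ C : PLSCycle α, C.In S.Λ ∧ ∀ x ∈ S.J, (ψ x ∈ Γ ↔ C.IsMidpointPt x))

/-! ### Matroids -/

/-- A (finite) matroid on a finite ground set, given by its independent sets. -/
structure FinMatroid (β : Type*) where
  E : Finset β
  Indep : Finset β → Prop
  indep_subset : ∀ I, Indep I → I ⊆ E
  indep_empty : Indep ∅
  indep_mono : ∀ I J, Indep J → I ⊆ J → Indep I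
  indep_exchange : ∀ I J, Indep I → Indep J → I.card < J.card →
    ∃ x ∈ J, x ∉ I ∧ Indep (insert x I)

namespace FinMatroid
variable {β : Type*}

/-- Rank of a subset. -/
def rkOn (M : FinMatroid β) (X : Finset β) : ℕ :=
  (X.powerset.filter fun I => M.Indep I).sup Finset.card

/-- Rank of the matroid. -/
def rk (M : FinMatroid β) : ℕ := M.rkOn M.E

/-- Closure of a subset. -/
def cl (M : FinMatroid β) (X : Finset β) : Finset β :=
  M.E.filter fun e => M.rkOn (insert e (X ∩ M.E)) = M.rkOn (X ∩ M.E)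

/-- Simple matroid: all subsets of cardinality at most 2 are independent. -/
def IsSimple (M : FinMatroid β) : Prop :=
  ∀ X : Finset β, X ⊆ M.E → X.card ≤ 2 → M.Indep X

/-- Flat (closed set) of a matroid. -/
def Flat (M : FinMatroid β) (F : Finset β) : Prop := F ⊆ M.E ∧ M.cl F = F

/-- Binary matroid: representable over GF(2). -/
def IsBinary (M : FinMatroid β) : Prop :=
  ∃ (m : ℕ) (ρ : β → (Fin m → ZMod 2)),
    ∀ I : Finset β, I ⊆ M.E →
      (M.Indep I ↔ LinearIndependent (ZMod 2) fun x : {y // y ∈ I} => ρ x.1)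

/-- Graphic matroid: isomorphic to the cycle matroid of a graph. -/
def IsGraphic (M : FinMatroid β) : Prop :=
  ∃ (k : ℕ) (G : SimpleGraph (Fin k)) (φ : β → Sym2 (Fin k)),
    Set.BijOn φ (M.E : Set β) G.edgeSet ∧
    ∀ I : Finset β, I ⊆ M.E →
      (M.Indep I ↔ ∀ Γ : Finset (Sym2 (Fin k)), IsCircuitSet G Γ →
        ¬ (Γ : Set (Sym2 (Fin k))) ⊆ φ '' (I : Set β))

end FinMatroid

/-- `ψ` line-preservingly models the PLS `S` by the matroid `M`: a bijection from the
points onto the ground set taking each line to a dependent set. -/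
def LinePresMatroid {α β : Type*} (S : PLS α) (M : FinMatroid β) (ψ : α → β) : Prop :=
  Set.BijOn ψ (S.J : Set α) (M.E : Set β) ∧ ∀ ℓ ∈ S.Λ, ¬ M.Indep (ℓ.image ψ)

/-- Graph-trigger: every simple binary matroid that line-preservingly rank-models `S`
is graphic. -/
def PLS.GraphTrigger {α : Type*} (S : PLS α) : Prop :=
  ∀ (β : Type) (M : FinMatroid β) (ψ : α → β),
    M.IsSimple → M.IsBinary → LinePresMatroid S M ψ → (M.rk : ℤ) = S.rk → M.IsGraphic

/-! ### Lines of modular lattices, MoPLSes, lattice-modeling -/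

/-- All pairs of distinct elements of `m` have the same join. -/
def ConstJoin {L : Type*} [Lattice L] (m : Finset L) : Prop :=
  ∀ p ∈ m, ∀ q ∈ m, ∀ p' ∈ m, ∀ q' ∈ m, p ≠ q → p' ≠ q' → p ⊔ q = p' ⊔ q'

/-- A line of a modular lattice: a 3-element subset of `J(L)` with constant pairwise
join, maximal with this property. -/
def IsLine (L : Type*) [Lattice L] [Fintype L] (ℓ : Finset L) : Prop :=
  ℓ ⊆ JFinset L ∧ ℓ.card = 3 ∧ ConstJoin ℓ ∧
    ∀ m : Finset L, m ⊆ JFinset L → ℓ ⊆ m → ConstJoin m → m = ℓ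

/-- The join of a line. -/
def lineJoin {L : Type*} [Lattice L] [BoundedOrder L] (ℓ : Finset L) : L := ℓ.sup id

/-- A MoPLS of `L`: the PLS on `J(L)` whose lines form a maximal family of pairwise
inequivalent lines of `L`. -/
def IsMoPLS (L : Type*) [Lattice L] [BoundedOrder L] [Fintype L] (S : PLS L) : Prop :=
  S.J = JFinset L ∧ (∀ ℓ ∈ S.Λ, IsLine L ℓ) ∧
    (∀ ℓ ∈ S.Λ, ∀ ℓ' ∈ S.Λ, ℓ ≠ ℓ' → lineJoin ℓ ≠ lineJoin ℓ') ∧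
    ∀ m : Finset L, IsLine L m → ∃ ℓ ∈ S.Λ, lineJoin ℓ = lineJoin m

/-- A graph lattice-models a finite lattice `L` via `φ`: `φ` is a bijection from
`J(L)` onto the edge set, all sets `φ(J(a))` are closed in the cycle matroid, and the
rank of the cycle matroid equals the height of `L`. -/
def LatticeModelsGraph (L : Type*) [Lattice L] [BoundedOrder L] [Fintype L]
    {V : Type*} [Fintype V] (G : SimpleGraph V) (φ : L → Sym2 V) : Prop :=
  Set.BijOn φ (JFinset L : Set L) G.edgeSet ∧
    (∀ a : L, graphCl G ((Jle a).image φ) = (((Jle a).image φ : Finset (Sym2 V)) : Set (Sym2 V))) ∧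
    graphRank G = latHeight L


/-! ### Linear-algebraic modeling -/

/-- A simple set of vectors: no zero vector, no two distinct proportional vectors. -/
def SimpleVecSet (k : Type*) [Field k] {W : Type*} [AddCommGroup W] [Module k W]
    (E : Finset W) : Prop :=
  (0 : W) ∉ E ∧ ∀ v ∈ E, ∀ w ∈ E, v ≠ w → ∀ c : k, w ≠ c • v

/-- `φ` lattice-models `L` by the set `E` of vectors (with the linear-dependence
matroid): `E` is simple, each `span(φ(J(a))) ∩ E = φ(J(a))`, and `dim span E = d(L)`. -/
def LatticeModelsVec (k : Type*) [Field k] {W : Type*} [AddCommGroup W] [Module k W]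
    (L : Type*) [Lattice L] [BoundedOrder L] [Fintype L] (E : Finset W) (φ : L → W) : Prop :=
  Set.BijOn φ (JFinset L : Set L) (E : Set W) ∧ SimpleVecSet k E ∧
    (∀ a : L, (Submodule.span k (((Jle a).image φ : Finset W) : Set W) : Set W) ∩ (E : Set W)
        = (((Jle a).image φ : Finset W) : Set W)) ∧
    Module.finrank k (Submodule.span k ((E : Finset W) : Set W)) = latHeight L

section Aux14

variable {L : Type*} [Lattice L] [BoundedOrder L] [Fintype L]

/-- Saturated chains of covers from `x` to `y` of length `n`. -/
inductive Sat14 : L → L → ℕ → Prop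
  | refl (x : L) : Sat14 x x 0
  | step {x z y : L} {n : ℕ} : x ⋖ z → Sat14 z y n → Sat14 x y (n + 1)

namespace Sat14

lemma le {x y : L} {n : ℕ} (h : Sat14 x y n) : x ≤ y := by
  induction h with
  | refl => exact le_rfl
  | step hc _ ih => exact hc.le.trans ih

lemma eq_of_zero {x y : L} (h : Sat14 x y 0) : x = y := by cases h; rfl

lemma glue {x y z : L} {n m : ℕ} (h1 : Sat14 x y n) (h2 : Sat14 y z m) :
    Sat14 x z (n + m) := by
  induction h1 with
  | refl => simpa using h2
  | step hc _ ih =>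
      have := Sat14.step hc (ih h2)
      simpa [Nat.succ_add] using this

lemma single {x y : L} (h : x ⋖ y) : Sat14 x y 1 := Sat14.step h (Sat14.refl y)

lemma snoc {x y z : L} {n : ℕ} (h : Sat14 x y n) (hc : y ⋖ z) : Sat14 x z (n + 1) :=
  h.glue (single hc)

lemma top_decomp {n : ℕ} : ∀ {x y : L}, Sat14 x y (n + 1) → ∃ z, Sat14 x z n ∧ z ⋖ y := by
  induction n with
  | zero =>
      intro x y h
      cases h with
      | step hc hs => exact ⟨x, Sat14.refl x, hs.eq_of_zero ▸ hc⟩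
  | succ n ih =>
      intro x y h
      cases h with
      | step hc hs =>
          obtain ⟨w, hw, hwc⟩ := ih hs
          exact ⟨w, Sat14.step hc hw, hwc⟩

lemma bot_right {x : L} {n : ℕ} (h : Sat14 x (⊥ : L) n) : n = 0 := by
  cases h with
  | refl => rfl
  | step hc hs =>
      exact absurd (hc.lt.trans_le hs.le) (not_lt_bot)

end Sat14

lemma exists_covBy_of_lt {x y : L} (h : x < y) : ∃ z, x ⋖ z ∧ z ≤ y := by
  obtain ⟨m, hm, hmin⟩ := Finset.exists_minimal
    (s := Finset.univ.filter fun z => x < z ∧ z ≤ y)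
    ⟨y, by simp [h]⟩
  simp only [Finset.mem_filter, Finset.mem_univ, true_and] at hm
  refine ⟨m, ⟨hm.1, fun w hw hw2 => ?_⟩, hm.2⟩
  exact hw2.not_ge (hmin (by simp [hw, hw2.le.trans hm.2]) hw2.le)

lemma aux14_exists_covBy_le_of_lt {x y : L} (h : x < y) : ∃ z, x ≤ z ∧ z ⋖ y := by
  obtain ⟨m, hm, hmax⟩ := Finset.exists_maximal
    (s := Finset.univ.filter fun z => x ≤ z ∧ z < y)
    ⟨x, by simp [h, le_refl]⟩
  simp only [Finset.mem_filter, Finset.mem_univ, true_and] at hm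
  refine ⟨m, hm.1, ⟨hm.2, fun w hw hw2 => ?_⟩⟩
  exact hw.not_ge (hmax (by simp [hm.1.trans hw.le, hw2]) hw.le)

lemma exists_sat14 {y : L} : ∀ {x : L}, x ≤ y → ∃ n, Sat14 x y n := by
  intro x
  induction x using WellFoundedGT.induction with
  | _ x ih =>
      intro hxy
      rcases eq_or_lt_of_le hxy with rfl | hlt
      · exact ⟨0, Sat14.refl x⟩
      · obtain ⟨z, hxz, hzy⟩ := exists_covBy_of_lt hlt
        obtain ⟨n, hn⟩ := ih z hxz.lt hzy
        exact ⟨n + 1, Sat14.step hxz hn⟩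


section Modular
variable [IsModularLattice L]

lemma aux14_covBy_sup {u v w : L} (huv : u ⋖ v) (h : v ⊓ w = u) : w ⋖ v ⊔ w := by
  constructor
  · refine lt_of_le_of_ne le_sup_right fun he => ?_
    have hv : v ≤ w := le_sup_left.trans he.symm.le
    have : v ⊓ w = v := inf_eq_left.2 hv
    exact huv.lt.ne (h.symm.trans this)
  · intro z hz hz2
    have hmod : (w ⊔ v) ⊓ z = w ⊔ v ⊓ z := sup_inf_assoc_of_le v hz.le
    have hvz : u ≤ v ⊓ z := h ▸ le_inf (inf_le_left) ((inf_le_right).trans hz.le)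
    rcases eq_or_lt_of_le hvz with he | hlt
    · have : (w ⊔ v) ⊓ z = z := inf_eq_right.2 (by rw [sup_comm]; exact hz2.le)
      rw [hmod, ← he] at this
      have : z = w := by
        rw [← this]
        exact (sup_eq_left.2 (h ▸ inf_le_right : u ≤ w)).symm ▸ rfl
      exact hz.ne' this
    · have hvz2 : v ⊓ z = v := by
        rcases huv.eq_or_eq (c := v ⊓ z) hlt.le inf_le_left with he | he
        · exact absurd he.symm hlt.ne
        · exact he
      have : v ≤ z := hvz2 ▸ inf_le_right
      exact hz2.not_ge (sup_le this hz.le) |>.elim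

lemma aux14_inf_covBy {x y b : L} (hxy : x ≠ y) (hx : x ⋖ b) (hy : y ⋖ b) :
    x ⊓ y ⋖ x := by
  constructor
  · refine lt_of_le_of_ne inf_le_left fun he => ?_
    have hxle : x ≤ y := by rw [← he]; exact inf_le_right
    exact hx.2 (lt_of_le_of_ne hxle hxy) hy.lt
  · intro z hz hz2
    have hyzy : y ≤ z ⊔ y := le_sup_right
    have hzyb : z ⊔ y ≤ b := sup_le (hz2.le.trans hx.le) hy.le
    rcases eq_or_lt_of_le hyzy with he | hlt
    · have : z ≤ y := le_sup_left.trans_eq he.symm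
      exact hz.not_ge (le_inf hz2.le this)
    · have hb : z ⊔ y = b := by
        by_contra hne
        exact hy.2 hlt (lt_of_le_of_ne hzyb hne)
      have hmod : (z ⊔ y) ⊓ x = z ⊔ y ⊓ x := sup_inf_assoc_of_le y hz2.le
      have : x = z := by
        have h1 : (z ⊔ y) ⊓ x = x := by rw [hb]; exact inf_eq_right.2 hx.le
        have h2 : z ⊔ y ⊓ x = z := sup_eq_left.2 ((inf_comm y x).le.trans hz.le)
        rw [hmod, h2] at h1; exact h1.symm
      exact hz2.ne this.symm

lemma aux14_sat_unique : ∀ b : L, ∀ {m m' : ℕ},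
    Sat14 (⊥ : L) b m → Sat14 (⊥ : L) b m' → m = m' := by
  intro b
  induction b using WellFoundedLT.induction with
  | _ b ih =>
      intro m m' h h'
      match m, m' with
      | 0, m' =>
          have hb : (⊥ : L) = b := h.eq_of_zero
          subst hb
          exact (h'.bot_right).symm
      | m + 1, 0 =>
          have hb : (⊥ : L) = b := h'.eq_of_zero
          subst hb
          exact h.bot_right
      | m + 1, m' + 1 =>
          obtain ⟨x, hx, hxb⟩ := h.top_decomp
          obtain ⟨y, hy, hyb⟩ := h'.top_decomp
          by_cases hxy : x = y
          · subst hxy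
            have := ih x hxb.lt hx hy
            omega
          · have hcx : x ⊓ y ⋖ x := aux14_inf_covBy hxy hxb hyb
            have hcy : x ⊓ y ⋖ y := by
              rw [inf_comm]
              exact aux14_inf_covBy (Ne.symm hxy) hyb hxb
            obtain ⟨t, ht⟩ := exists_sat14 (bot_le : (⊥ : L) ≤ x ⊓ y)
            have h1 : m = t + 1 := ih x hxb.lt hx (ht.snoc hcx)
            have h2 : m' = t + 1 := ih y hyb.lt hy (ht.snoc hcy)
            omega

end Modular


lemma aux14_sat_chain {x y : L} {n : ℕ} (h : Sat14 x y n) :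
    ∃ c : Finset L, IsChain (· ≤ ·) (c : Set L) ∧ c.card = n + 1 ∧ ∀ w ∈ c, x ≤ w := by
  induction h with
  | refl x =>
      exact ⟨{x}, Set.Subsingleton.isChain (by simp [Set.subsingleton_singleton]),
        by simp, by simp⟩
  | step hc _ ih =>
      obtain ⟨c, hch, hcard, hge⟩ := ih
      rename_i x z y n hxz
      have hxnot : x ∉ c := fun hx => hc.lt.not_ge (hge x hx)
      refine ⟨insert x c, ?_, ?_, ?_⟩
      · rw [Finset.coe_insert]
        exact hch.insert fun b hb _ => Or.inl (hc.le.trans (hge b hb))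
      · rw [Finset.card_insert_of_notMem hxnot, hcard]
      · intro w hw
        rcases Finset.mem_insert.1 hw with rfl | hw
        · exact le_rfl
        · exact hc.le.trans (hge w hw)

lemma aux14_chain_to_sat :
    ∀ c : Finset L, IsChain (· ≤ ·) (c : Set L) → c.Nonempty →
      ∃ (y : L) (m : ℕ), y ∈ c ∧ Sat14 (⊥ : L) y m ∧ c.card ≤ m + 1 := by
  intro c
  induction c using Finset.strongInductionOn with
  | _ c ih =>
      intro hch hne
      obtain ⟨y, hy, hmax⟩ := Finset.exists_maximal hne
      have hall : ∀ w ∈ c, w ≤ y := by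
        intro w hw
        by_cases hwy : w = y
        · exact hwy.le
        · rcases hch hw hy hwy with h | h
          · exact h
          · exact absurd (le_antisymm (hmax hw h) h) hwy
      by_cases hc' : (c.erase y).Nonempty
      · obtain ⟨y', m', hy'mem, hy'sat, hy'card⟩ :=
          ih (c.erase y) (Finset.erase_ssubset hy) (hch.mono (by simp [Finset.coe_subset])) hc'
        have hy'y : y' < y :=
          lt_of_le_of_ne (hall y' (Finset.mem_of_mem_erase hy'mem))
            (Finset.ne_of_mem_erase hy'mem)
        obtain ⟨t, ht⟩ := exists_sat14 hy'y.le
        have ht1 : 1 ≤ t := by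
          rcases Nat.eq_zero_or_pos t with rfl | h
          · exact absurd ht.eq_of_zero hy'y.ne
          · exact h
        refine ⟨y, m' + t, hy, hy'sat.glue ht, ?_⟩
        have : c.card = (c.erase y).card + 1 := by
          rw [Finset.card_erase_of_mem hy]
          have : 1 ≤ c.card := Finset.card_pos.2 hne
          omega
        omega
      · have : c = {y} := by
          apply Finset.eq_singleton_iff_unique_mem.2
          refine ⟨hy, fun w hw => ?_⟩
          by_contra hwy
          exact hc' ⟨w, Finset.mem_erase.2 ⟨hwy, hw⟩⟩
        obtain ⟨m, hm⟩ := exists_sat14 (bot_le : (⊥ : L) ≤ y)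
        exact ⟨y, m, hy, hm, by simp [this]⟩

lemma aux14_latHeight_eq [IsModularLattice L] {s : ℕ} (h : Sat14 (⊥ : L) ⊤ s) :
    latHeight L = s := by
  have hsup : (((Finset.univ : Finset (Finset L)).filter fun c : Finset L =>
      IsChain (· ≤ ·) (c : Set L)).sup Finset.card) = s + 1 := by
    apply le_antisymm
    · apply Finset.sup_le
      intro c hc
      have hch : IsChain (· ≤ ·) (c : Set L) := (Finset.mem_filter.1 hc).2
      rcases Finset.eq_empty_or_nonempty c with rfl | hne
      · simp
      · obtain ⟨y, m, _, hsat, hcard⟩ := aux14_chain_to_sat c hch hne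
        obtain ⟨t, ht⟩ := exists_sat14 (le_top : y ≤ ⊤)
        have := aux14_sat_unique (⊤ : L) (hsat.glue ht) h
        omega
    · obtain ⟨c, hch, hcard, _⟩ := aux14_sat_chain h
      calc s + 1 = c.card := hcard.symm
        _ ≤ _ := Finset.le_sup (by simp [hch])
  rw [latHeight, hsup]
  omega

section LinAlg
variable {k : Type*} [Field k] {W : Type*} [AddCommGroup W] [Module k W]

lemma aux14_covBy_of_finrank {A B : Submodule k W} [FiniteDimensional k B] (hle : A ≤ B)
    (h : Module.finrank k A + 1 = Module.finrank k B) : A ⋖ B := by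
  constructor
  · refine lt_of_le_of_ne hle fun he => ?_
    rw [he] at h; omega
  · intro C hC1 hC2
    haveI : FiniteDimensional k C := Submodule.finiteDimensional_of_le hC2.le
    have h1 := Submodule.finrank_lt_finrank_of_lt hC1
    have h2 := Submodule.finrank_lt_finrank_of_lt hC2
    omega

lemma aux14_finrank_of_covBy {A B : Submodule k W} [FiniteDimensional k B] (h : A ⋖ B) :
    Module.finrank k A + 1 = Module.finrank k B := by
  haveI : FiniteDimensional k A := Submodule.finiteDimensional_of_le h.le
  have h1 : Module.finrank k A < Module.finrank k B :=
    Submodule.finrank_lt_finrank_of_lt h.lt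
  obtain ⟨x, hxB, hxA⟩ := SetLike.exists_of_lt h.lt
  have hx0 : x ≠ 0 := fun h0 => hxA (h0 ▸ A.zero_mem)
  set S : Submodule k W := Submodule.span k {x} with hS
  haveI : FiniteDimensional k S := FiniteDimensional.span_of_finite k (Set.finite_singleton x)
  have hSB : S ≤ B := (Submodule.span_singleton_le_iff_mem x B).2 hxB
  have hAC : A < A ⊔ S := by
    refine lt_of_le_of_ne le_sup_left fun he => ?_
    exact hxA (he ▸ le_sup_right (a := A) (Submodule.mem_span_singleton_self x))
  have hACB : A ⊔ S = B := by
    by_contra hne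
    exact h.2 hAC (lt_of_le_of_ne (sup_le h.le hSB) hne)
  have h2 := Submodule.finrank_sup_add_finrank_inf_eq A S
  have h3 : Module.finrank k S = 1 := finrank_span_singleton hx0
  rw [hACB, h3] at h2
  omega

end LinAlg

end Aux14




section JleLemmas
variable {L : Type*} [Lattice L] [BoundedOrder L] [Fintype L]

lemma aux14_mem_Jle {p a : L} : p ∈ Jle a ↔ SupIrred p ∧ p ≤ a := by
  simp [Jle]

lemma aux14_Jle_sub (a : L) : Jle a ⊆ JFinset L := fun p hp => by
  simp only [JFinset, Finset.mem_filter, Finset.mem_univ, true_and]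
  exact (aux14_mem_Jle.1 hp).1

lemma aux14_Jle_mono {a b : L} (h : a ≤ b) : Jle a ⊆ Jle b := fun p hp => by
  obtain ⟨h1, h2⟩ := aux14_mem_Jle.1 hp
  exact aux14_mem_Jle.2 ⟨h1, h2.trans h⟩

lemma aux14_Jsup (a : L) : (Jle a).sup id = a := by
  apply le_antisymm
  · exact Finset.sup_le fun p hp => (aux14_mem_Jle.1 hp).2
  · obtain ⟨s, hs, hirr⟩ := exists_supIrred_decomposition a
    calc a = s.sup id := hs.symm
      _ ≤ (Jle a).sup id := Finset.sup_mono fun b hb =>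
            aux14_mem_Jle.2 ⟨hirr hb, hs ▸ Finset.le_sup (f := id) hb⟩

lemma aux14_Jle_bot : Jle (⊥ : L) = ∅ := by
  ext p
  simp only [aux14_mem_Jle, Finset.notMem_empty, iff_false, not_and, le_bot_iff]
  intro hirr he
  exact not_supIrred_bot (he ▸ hirr)

lemma aux14_Jle_top : Jle (⊤ : L) = JFinset L := by
  ext p
  simp [aux14_mem_Jle, JFinset]

end JleLemmas

theorem aux14_part1 (k : Type) [Field k] (L : Type) [Lattice L] [BoundedOrder L] [Fintype L]
    [IsModularLattice L] (W : Type) [AddCommGroup W] [Module k W] (E : Finset W) (φ : L → W)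
    (hmodel : LatticeModelsVec k L E φ) :
    IsTightEmbedding fun a : L =>
      Submodule.span k (((Jle a).image φ : Finset W) : Set W) := by
  obtain ⟨hbij, hsimple, hclosed, hdim⟩ := hmodel
  set V : L → Submodule k W :=
    fun a : L => Submodule.span k (((Jle a).image φ : Finset W) : Set W) with hV
  have hVdef : ∀ a : L, V a = Submodule.span k (((Jle a).image φ : Finset W) : Set W) :=
    fun a => rfl
  set d : L → ℕ := fun a => Module.finrank k (V a) with hd
  have hdef : ∀ a : L, d a = Module.finrank k (V a) := fun a => rfl
  have hfin : ∀ a : L, FiniteDimensional k (V a) := fun a => by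
    rw [hVdef a]; infer_instance
  have hVmono : ∀ {a b : L}, a ≤ b → V a ≤ V b := by
    intro a b hab
    exact Submodule.span_mono (Finset.coe_subset.2 (Finset.image_subset_image (aux14_Jle_mono hab)))
  have hmemV : ∀ {a p : L}, p ∈ Jle a → φ p ∈ V a := by
    intro a p hp
    exact Submodule.subset_span (Finset.mem_coe.2 (Finset.mem_image_of_mem φ hp))
  have hle_of_V : ∀ {a b : L}, V a ≤ V b → a ≤ b := by
    intro a b hab
    have hsub : Jle a ⊆ Jle b := by
      intro p hp
      have hpJ : p ∈ JFinset L := aux14_Jle_sub a hp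
      have h1 : φ p ∈ (V b : Set W) := hab (hmemV hp)
      have h2 : φ p ∈ (E : Set W) := hbij.1 (Finset.mem_coe.2 hpJ)
      have h3 : φ p ∈ (((Jle b).image φ : Finset W) : Set W) := by
        rw [← hclosed b]
        exact ⟨h1, h2⟩
      obtain ⟨q, hq, hqeq⟩ := Finset.mem_image.1 (Finset.mem_coe.1 h3)
      have : q = p := hbij.2.1 (Finset.mem_coe.2 (aux14_Jle_sub b hq)) (Finset.mem_coe.2 hpJ) hqeq
      exact this ▸ hq
    calc a = (Jle a).sup id := (aux14_Jsup a).symm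
      _ ≤ (Jle b).sup id := Finset.sup_mono hsub
      _ = b := aux14_Jsup b
  have hVlt : ∀ {a b : L}, a < b → V a < V b := by
    intro a b hab
    refine lt_of_le_of_ne (hVmono hab.le) fun he => ?_
    exact hab.not_ge (hle_of_V (he ▸ le_rfl))
  have hdlt : ∀ {a b : L}, a < b → d a < d b := by
    intro a b hab
    haveI := hfin b
    exact Submodule.finrank_lt_finrank_of_lt (hVlt hab)
  have hVbot : V ⊥ = ⊥ := by
    rw [hVdef, aux14_Jle_bot]
    simp
  have hdbot : d ⊥ = 0 := by
    rw [hdef, hVbot]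
    simp
  have hVtop : V ⊤ = Submodule.span k ((E : Finset W) : Set W) := by
    rw [hVdef, aux14_Jle_top]
    congr 1
    rw [Finset.coe_image]
    exact hbij.image_eq
  obtain ⟨s, hsat⟩ := exists_sat14 (bot_le : (⊥ : L) ≤ ⊤)
  have hlat : latHeight L = s := aux14_latHeight_eq hsat
  have hdtop : d ⊤ = s := by
    rw [hdef, hVtop, hdim, hlat]
  have hd_sat : ∀ {x y : L} {n : ℕ}, Sat14 x y n → d x + n ≤ d y := by
    intro x y n h
    induction h with
    | refl => simp
    | step hc _ ih =>
        have := hdlt hc.lt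
        omega
  have hcov_d : ∀ {a b : L}, a ⋖ b → d b = d a + 1 := by
    intro a b hab
    obtain ⟨m1, h1⟩ := exists_sat14 (bot_le : (⊥ : L) ≤ a)
    obtain ⟨m2, h2⟩ := exists_sat14 (le_top : b ≤ ⊤)
    have hglue : Sat14 (⊥ : L) ⊤ (m1 + 1 + m2) := (h1.snoc hab).glue h2
    have hms : m1 + 1 + m2 = s := aux14_sat_unique ⊤ hglue hsat
    have e1 := hd_sat h1
    have e2 := hdlt hab.lt
    have e3 := hd_sat h2
    omega
  have hmod_d : ∀ a b : L, d (a ⊔ b) + d (a ⊓ b) = d a + d b := by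
    intro a
    induction a using WellFoundedLT.induction with
    | _ a ih =>
        intro b
        by_cases hab : a ≤ b
        · rw [sup_eq_right.2 hab, inf_eq_left.2 hab]
          omega
        · have hlt : a ⊓ b < a := lt_of_le_of_ne inf_le_left fun he => hab (inf_eq_left.1 he)
          obtain ⟨a', ha'1, ha'2⟩ := aux14_exists_covBy_le_of_lt hlt
          have hkey : a ⊓ (a' ⊔ b) = a' := by
            rw [inf_comm, sup_inf_assoc_of_le b ha'2.le]
            exact sup_eq_left.2 (le_trans (inf_comm b a).le ha'1)
          have hcov : (a' ⊔ b) ⋖ (a ⊔ b) := by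
            have h1 : a ⊔ (a' ⊔ b) = a ⊔ b := by
              rw [← sup_assoc, sup_eq_left.2 ha'2.le]
            have := aux14_covBy_sup ha'2 hkey
            rwa [h1] at this
          have hinf : a' ⊓ b = a ⊓ b :=
            le_antisymm (inf_le_inf_right b ha'2.le) (le_inf ha'1 inf_le_right)
          have hih := ih a' ha'2.lt b
          rw [hinf] at hih
          have e1 : d a = d a' + 1 := hcov_d ha'2
          have e2 : d (a ⊔ b) = d (a' ⊔ b) + 1 := hcov_d hcov
          omega
  have hVsup : ∀ b a : L, V (a ⊔ b) = V a ⊔ V b := by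
    intro b
    induction b using WellFoundedLT.induction with
    | _ b ih =>
        intro a
        by_cases hba : b ≤ a
        · rw [sup_eq_left.2 hba, sup_eq_left.2 (hVmono hba)]
        · have hlt : a ⊓ b < b := lt_of_le_of_ne inf_le_right fun he => hba (inf_eq_right.1 he)
          obtain ⟨b', hb'1, hb'2⟩ := aux14_exists_covBy_le_of_lt hlt
          have hkey : b ⊓ (a ⊔ b') = b' := by
            rw [inf_comm, sup_comm, sup_inf_assoc_of_le a hb'2.le]
            exact sup_eq_left.2 hb'1
          have hcov : (a ⊔ b') ⋖ (a ⊔ b) := by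
            have h1 : b ⊔ (a ⊔ b') = a ⊔ b := by
              rw [sup_comm b (a ⊔ b'), sup_assoc, sup_eq_right.2 hb'2.le]
            have := aux14_covBy_sup hb'2 hkey
            rwa [h1] at this
          have hIH : V (a ⊔ b') = V a ⊔ V b' := ih b' hb'2.lt a
          have h1 : V a ⊔ V b ≤ V (a ⊔ b) := sup_le (hVmono le_sup_left) (hVmono le_sup_right)
          have h2 : V (a ⊔ b') ≤ V a ⊔ V b := by
            rw [hIH]
            exact sup_le_sup_left (hVmono hb'2.le) _
          have h3 : V (a ⊔ b') ≠ V a ⊔ V b := by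
            intro he
            have hVb : V b ≤ V (a ⊔ b') := by rw [he]; exact le_sup_right
            have hble : b ≤ a ⊔ b' := hle_of_V hVb
            have : b = b' := by rw [← hkey, inf_eq_left.2 hble]
            exact hb'2.lt.ne' this
          haveI := hfin (a ⊔ b)
          haveI := hfin (a ⊔ b')
          haveI := hfin a
          haveI := hfin b
          have h4 : d (a ⊔ b') < Module.finrank k ↥(V a ⊔ V b) := by
            rw [hdef]
            exact Submodule.finrank_lt_finrank_of_lt (lt_of_le_of_ne h2 h3)
          have h5 : Module.finrank k ↥(V a ⊔ V b) ≤ d (a ⊔ b) := by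
            rw [hdef]
            exact Submodule.finrank_mono h1
          have h6 : d (a ⊔ b) = d (a ⊔ b') + 1 := hcov_d hcov
          have h7 : Module.finrank k ↥(V a ⊔ V b) = Module.finrank k ↥(V (a ⊔ b)) := by
            rw [← hdef]
            omega
          exact (Submodule.eq_of_le_of_finrank_eq h1 h7).symm
  have hVinf : ∀ a b : L, V (a ⊓ b) = V a ⊓ V b := by
    intro a b
    haveI := hfin a
    haveI := hfin b
    haveI := hfin (a ⊓ b)
    haveI := hfin (a ⊔ b)
    have h1 : V (a ⊓ b) ≤ V a ⊓ V b := le_inf (hVmono inf_le_left) (hVmono inf_le_right)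
    have h2 := Submodule.finrank_sup_add_finrank_inf_eq (V a) (V b)
    rw [← hVsup b a] at h2
    have h3 := hmod_d a b
    simp only [hdef] at h3
    have h4 : Module.finrank k ↥(V (a ⊓ b)) = Module.finrank k ↥(V a ⊓ V b) := by omega
    haveI : FiniteDimensional k ↥(V a ⊓ V b) :=
      Submodule.finiteDimensional_of_le (inf_le_left : V a ⊓ V b ≤ V a)
    exact Submodule.eq_of_le_of_finrank_eq h1 h4
  have hVcov : ∀ a b : L, a ⋖ b → V a ⋖ V b := by
    intro a b hab
    haveI := hfin b
    apply aux14_covBy_of_finrank (hVmono hab.le)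
    have := hcov_d hab
    simp only [hdef] at this
    omega
  exact ⟨fun a b => hVsup b a, fun a b => hVinf a b, hVbot, fun a b h => hVcov a b h⟩


theorem aux14_part2 (k : Type) [Field k] (L : Type) [Lattice L] [BoundedOrder L] [Fintype L]
    [IsModularLattice L] (m : ℕ) (Φ' : L → Submodule k (Fin m → k))
    (hΦ : IsTightEmbedding Φ') :
    ∃ (E : Finset (Fin m → k)) (φ : L → (Fin m → k)),
      LatticeModelsVec k L E φ ∧
      ∀ a : L, Φ' a = Submodule.span k (((Jle a).image φ : Finset (Fin m → k)) :
        Set (Fin m → k)) := by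
  obtain ⟨hsup, hinf, hbot, hcov⟩ := hΦ
  have hmono : ∀ {a b : L}, a ≤ b → Φ' a ≤ Φ' b := by
    intro a b hab
    have h1 : Φ' (a ⊓ b) = Φ' a ⊓ Φ' b := hinf a b
    rw [inf_eq_left.2 hab] at h1
    exact h1.le.trans inf_le_right
  set low : L → L := fun p => (Finset.univ.filter fun x => x < p).sup id with hlow
  have hlow_ge : ∀ {x p : L}, x < p → x ≤ low p := by
    intro x p hx
    exact Finset.le_sup (f := id) (by simp [hx])
  have hlow_le : ∀ p : L, low p ≤ p := fun p =>
    Finset.sup_le fun x hx => (Finset.mem_filter.1 hx).2.le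
  have hlow_cov : ∀ {p : L}, SupIrred p → low p ⋖ p := by
    intro p hp
    have hne : low p ≠ p := by
      intro he
      obtain ⟨x, hx, hxe⟩ := hp.finset_sup_eq he
      exact (Finset.mem_filter.1 hx).2.ne hxe
    refine ⟨lt_of_le_of_ne (hlow_le p) hne, fun w hw hw2 => ?_⟩
    exact hw.not_ge (hlow_ge hw2)
  have hΦcov : ∀ {p : L}, SupIrred p → Φ' (low p) ⋖ Φ' p := fun {p} hp =>
    hcov _ _ (hlow_cov hp)
  have hchoice : ∀ p : L, SupIrred p → ∃ v, v ∈ Φ' p ∧ v ∉ Φ' (low p) := by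
    intro p hp
    obtain ⟨v, h1, h2⟩ := SetLike.exists_of_lt (hΦcov hp).lt
    exact ⟨v, h1, h2⟩
  set φ : L → (Fin m → k) :=
    fun p => if h : SupIrred p then Classical.choose (hchoice p h) else 0 with hφ
  have hφmem : ∀ {p : L}, SupIrred p → φ p ∈ Φ' p := by
    intro p hp
    simp only [hφ, dif_pos hp]
    exact (Classical.choose_spec (hchoice p hp)).1
  have hφnot : ∀ {p : L}, SupIrred p → φ p ∉ Φ' (low p) := by
    intro p hp
    simp only [hφ, dif_pos hp]
    exact (Classical.choose_spec (hchoice p hp)).2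
  have hkey : ∀ {p q : L}, SupIrred q → φ q ∈ Φ' p → q ≤ p := by
    intro p q hq hmem
    by_contra hqp
    have h1 : φ q ∈ Φ' (p ⊓ q) := by
      rw [hinf p q]
      exact Submodule.mem_inf.2 ⟨hmem, hφmem hq⟩
    have h2 : p ⊓ q < q := lt_of_le_of_ne inf_le_right fun he => hqp (inf_eq_right.1 he)
    exact hφnot hq (hmono (hlow_ge h2) h1)
  have hspan : ∀ a : L, Φ' a =
      Submodule.span k (((Jle a).image φ : Finset (Fin m → k)) : Set (Fin m → k)) := by
    intro a
    induction a using WellFoundedLT.induction with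
    | _ a ih =>
        have hsub : Submodule.span k (((Jle a).image φ : Finset (Fin m → k)) :
            Set (Fin m → k)) ≤ Φ' a := by
          rw [Submodule.span_le]
          intro v hv
          obtain ⟨p, hp, rfl⟩ := Finset.mem_image.1 (Finset.mem_coe.1 hv)
          obtain ⟨hp1, hp2⟩ := aux14_mem_Jle.1 hp
          exact hmono hp2 (hφmem hp1)
        refine le_antisymm ?_ hsub
        by_cases ha : SupIrred a
        · have hIH := ih (low a) (hlow_cov ha).lt
          have h1 : Φ' (low a) ≤
              Submodule.span k (((Jle a).image φ : Finset (Fin m → k)) : Set (Fin m → k)) := by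
            rw [hIH]
            exact Submodule.span_mono
              (Finset.coe_subset.2 (Finset.image_subset_image (aux14_Jle_mono (hlow_le a))))
          have h2 : φ a ∈
              Submodule.span k (((Jle a).image φ : Finset (Fin m → k)) : Set (Fin m → k)) :=
            Submodule.subset_span
              (Finset.mem_coe.2 (Finset.mem_image_of_mem φ (aux14_mem_Jle.2 ⟨ha, le_rfl⟩)))
          have h3 : Φ' (low a) <
              Submodule.span k (((Jle a).image φ : Finset (Fin m → k)) : Set (Fin m → k)) :=
            lt_of_le_of_ne h1 fun he => hφnot ha (he ▸ h2)
          have h4 := (hΦcov ha).2 h3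
          exact (hsub.lt_or_eq.resolve_left h4).ge
        · by_cases hab : a = ⊥
          · subst hab
            rw [hbot]
            exact bot_le
          · have hex : ∃ b c : L, b ⊔ c = a ∧ b ≠ a ∧ c ≠ a := by
              by_contra h
              push_neg at h
              refine ha ⟨fun hmin => hab (hmin.eq_bot), fun b c hbc => ?_⟩
              by_contra hcon
              push_neg at hcon
              exact hcon.2 (h b c hbc hcon.1)
            obtain ⟨b, c, hbc, hbne, hcne⟩ := hex
            have hblt : b < a := lt_of_le_of_ne (hbc ▸ le_sup_left) hbne
            have hclt : c < a := lt_of_le_of_ne (hbc ▸ le_sup_right) hcne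
            have hspb := ih b hblt
            have hspc := ih c hclt
            have h5 : Φ' a = Φ' b ⊔ Φ' c := by rw [← hbc, hsup b c]
            rw [h5]
            refine sup_le ?_ ?_
            · rw [hspb]
              exact Submodule.span_mono
                (Finset.coe_subset.2 (Finset.image_subset_image (aux14_Jle_mono hblt.le)))
            · rw [hspc]
              exact Submodule.span_mono
                (Finset.coe_subset.2 (Finset.image_subset_image (aux14_Jle_mono hclt.le)))
  set E : Finset (Fin m → k) := (JFinset L).image φ with hE
  have hmemJ : ∀ {p : L}, p ∈ JFinset L ↔ SupIrred p := by
    intro p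
    simp [JFinset]
  have hinj : Set.InjOn φ ((JFinset L : Finset L) : Set L) := by
    intro p hp q hq he
    have hp' : SupIrred p := hmemJ.1 (Finset.mem_coe.1 hp)
    have hq' : SupIrred q := hmemJ.1 (Finset.mem_coe.1 hq)
    have h1 : p ≤ q := hkey hp' (he ▸ hφmem hq' : φ p ∈ Φ' q)
    have h2 : q ≤ p := hkey hq' (he ▸ hφmem hp')
    exact le_antisymm h1 h2
  have hbij : Set.BijOn φ ((JFinset L : Finset L) : Set L) ((E : Finset (Fin m → k)) :
      Set (Fin m → k)) := by
    refine ⟨fun p hp => ?_, hinj, ?_⟩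
    · exact Finset.mem_coe.2 (Finset.mem_image_of_mem φ (Finset.mem_coe.1 hp))
    · rw [hE, Finset.coe_image]
      exact Set.Subset.refl _
  have h0 : ∀ {p : L}, SupIrred p → φ p ≠ 0 := by
    intro p hp h0
    exact hφnot hp (h0 ▸ (Φ' (low p)).zero_mem)
  have hsimp : SimpleVecSet k E := by
    constructor
    · intro h0mem
      rw [hE] at h0mem
      obtain ⟨p, hp, hpe⟩ := Finset.mem_image.1 h0mem
      exact h0 (hmemJ.1 hp) hpe
    · intro v hv w hw hvw c hwc
      rw [hE] at hv hw
      obtain ⟨p, hp, rfl⟩ := Finset.mem_image.1 hv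
      obtain ⟨q, hq, rfl⟩ := Finset.mem_image.1 hw
      have hp' : SupIrred p := hmemJ.1 hp
      have hq' : SupIrred q := hmemJ.1 hq
      rcases eq_or_ne c 0 with rfl | hc
      · exact h0 hq' (by simpa using hwc)
      · have hmem1 : φ p ∈ Φ' q := by
          have h1 : φ q ∈ Φ' q := hφmem hq'
          rw [hwc] at h1
          have h2 := (Φ' q).smul_mem c⁻¹ h1
          simpa [smul_smul, inv_mul_cancel₀ hc] using h2
        have hle1 : p ≤ q := hkey hp' hmem1
        have hmem2 : φ q ∈ Φ' p := by
          rw [hwc]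
          exact (Φ' p).smul_mem c (hφmem hp')
        have hle2 : q ≤ p := hkey hq' hmem2
        exact hvw (le_antisymm hle1 hle2 ▸ rfl)
  have hclosed : ∀ a : L,
      ((Submodule.span k (((Jle a).image φ : Finset (Fin m → k)) : Set (Fin m → k)) :
        Submodule k (Fin m → k)) : Set (Fin m → k)) ∩ (E : Set (Fin m → k))
      = (((Jle a).image φ : Finset (Fin m → k)) : Set (Fin m → k)) := by
    intro a
    apply Set.Subset.antisymm
    · rintro v ⟨hv1, hv2⟩
      rw [hE] at hv2
      obtain ⟨q, hq, rfl⟩ := Finset.mem_image.1 (Finset.mem_coe.1 hv2)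
      have hq' : SupIrred q := hmemJ.1 hq
      have hmem : φ q ∈ Φ' a := by
        rw [hspan a]
        exact hv1
      have hqa : q ≤ a := hkey hq' hmem
      exact Finset.mem_coe.2 (Finset.mem_image_of_mem φ (aux14_mem_Jle.2 ⟨hq', hqa⟩))
    · intro v hv
      refine ⟨Submodule.subset_span hv, ?_⟩
      obtain ⟨q, hq, rfl⟩ := Finset.mem_image.1 (Finset.mem_coe.1 hv)
      rw [hE]
      exact Finset.mem_coe.2 (Finset.mem_image_of_mem φ (aux14_Jle_sub a hq))
  have hrank : ∀ {x y : L} {n : ℕ}, Sat14 x y n →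
      Module.finrank k (Φ' y) = Module.finrank k (Φ' x) + n := by
    intro x y n h
    induction h with
    | refl => simp
    | step hc _ ih =>
        have := aux14_finrank_of_covBy (hcov _ _ hc)
        omega
  obtain ⟨s, hsat⟩ := exists_sat14 (bot_le : (⊥ : L) ≤ ⊤)
  have hlat : latHeight L = s := aux14_latHeight_eq hsat
  have hEspan : Submodule.span k ((E : Finset (Fin m → k)) : Set (Fin m → k)) = Φ' ⊤ := by
    rw [hspan ⊤, aux14_Jle_top, hE]
  have hdim : Module.finrank k
      (Submodule.span k ((E : Finset (Fin m → k)) : Set (Fin m → k))) = latHeight L := by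
    rw [hEspan, hlat, hrank hsat, hbot]
    simp
  refine ⟨E, φ, ⟨hbij, hsimp, fun a => ?_, hdim⟩, fun a => ?_⟩
  · have h := hclosed a
    simp only [Finset.coe_image] at h ⊢
    exact h
  · have h := hspan a
    simp only [Finset.coe_image] at h ⊢
    exact h


theorem statement_14 (k : Type) [Field k]
    (L : Type) [Lattice L] [BoundedOrder L] [Fintype L] [IsModularLattice L] :
    (∀ (W : Type) [AddCommGroup W] [Module k W], ∀ (E : Finset W) (φ : L → W),
      LatticeModelsVec k L E φ →
      IsTightEmbedding fun a : L =>
        Submodule.span k (((Jle a).image φ : Finset W) : Set W)) ∧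
    (∀ (m : ℕ) (Φ' : L → Submodule k (Fin m → k)), IsTightEmbedding Φ' →
      ∃ (E : Finset (Fin m → k)) (φ : L → (Fin m → k)),
        LatticeModelsVec k L E φ ∧
        ∀ a : L, Φ' a = Submodule.span k (((Jle a).image φ : Finset (Fin m → k)) : Set (Fin m → k))) := by
  constructor
  · intro W _ _ E φ h
    exact aux14_part1 k L W E φ h
  · intro m Φ' h
    exact aux14_part2 k L m Φ' h

end
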